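/- Let A ⊆ {1,…,m} with |A| = n and M_A invertible (so LICQ holds and the active constraints determine u uniquely), and let Ã also satisfy LICQ. Suppose A and Ã are geometrically adjacent (their critical regions share a point θ̃) and suppose for some i ∈ Ã the matrix M_{A∪{i}} does not have full row rank. Then M_i is a linear combination of the rows {M_j}_{j ∈ A}, and the coefficients of constraints in A ∩ Ã in any such linear combination expressing M_i can be taken to involve some j ∈ A \ Ã; in particular, there exists j ∈ A \ Ã such that the rows {M_k}_{k ∈ A ∪ {i} \ {j}} are linearly independent. -/

import Mathlib

open Matrix

/-- The KKT system with active set `A` is solvable at offset `dθ`. -/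
def KKTSolvable {m n : ℕ} (M : Matrix (Fin m) (Fin n) ℝ) (dθ : Fin m → ℝ)
    (A : Finset (Fin m)) : Prop :=
  ∃ (u : Fin n → ℝ) (lam : Fin m → ℝ),
    u + Mᵀ.mulVec lam = 0 ∧
    (∀ i ∈ A, M.mulVec u i = dθ i) ∧ (∀ i ∈ A, 0 ≤ lam i) ∧
    (∀ i ∉ A, M.mulVec u i ≤ dθ i) ∧ (∀ i ∉ A, lam i = 0)

/-- if `|A| = n`, `M_A` is invertible (its rows are linearly independent),
`Ã` satisfies LICQ, `A` and `Ã` are geometrically adjacent, and adding `i ∈ Ã` to `A`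
breaks LICQ, then `M_i` lies in the span of the rows of `M_A`, and there exists
`j ∈ A \ Ã` such that the rows indexed by `A ∪ {i} \ {j}` are linearly independent. -/
theorem stmt_13 {p m n : ℕ}
    (M : Matrix (Fin m) (Fin n) ℝ) (d : (Fin p → ℝ) → Fin m → ℝ)
    (A Atil : Finset (Fin m)) (hcard : A.card = n)
    (hA : LinearIndependent ℝ (fun j : A => M j.1))
    (hAtil : LinearIndependent ℝ (fun j : Atil => M j.1))
    (hadj : ∃ θ : Fin p → ℝ, KKTSolvable M (d θ) A ∧ KKTSolvable M (d θ) Atil)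
    (i : Fin m) (hi : i ∈ Atil)
    (hdep : ¬ LinearIndependent ℝ (fun j : (insert i A : Finset (Fin m)) => M j.1)) :
    M i ∈ Submodule.span ℝ (Set.range fun j : A => M j.1) ∧
      ∃ j ∈ A \ Atil,
        LinearIndependent ℝ (fun k : ((insert i A).erase j : Finset (Fin m)) => M k.1) := by
  classical
  -- `i ∉ A`
  have hiA : i ∉ A := by
    intro h
    apply hdep
    have : (insert i A : Finset (Fin m)) = A := Finset.insert_eq_self.mpr h
    rw [this]; exact hA
  -- `A` is nonempty
  have hMi : M i ≠ 0 := hAtil.ne_zero ⟨i, hi⟩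
  have hAne : A.Nonempty := by
    rcases A.eq_empty_or_nonempty with h | h
    · exfalso
      have hn : n = 0 := by rw [← hcard, h, Finset.card_empty]
      apply hMi
      subst hn
      ext x; exact absurd x.2 (Nat.not_lt_zero _)
    · exact h
  have : Nonempty ↥A := hAne.to_subtype
  have hfr : Fintype.card ↥A = Module.finrank ℝ (Fin n → ℝ) := by
    rw [Fintype.card_coe, hcard, Module.finrank_fin_fun]
  -- the rows of `A` form a basis
  set b : Module.Basis ↥A ℝ (Fin n → ℝ) := basisOfLinearIndependentOfCardEqFinrank hA hfr with hb
  have hbcoe : ⇑b = fun j : A => M j.1 := coe_basisOfLinearIndependentOfCardEqFinrank hA hfr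
  have hspan : Submodule.span ℝ (Set.range fun j : A => M j.1) = ⊤ := by
    rw [← hbcoe]; exact b.span_eq
  have part1 : M i ∈ Submodule.span ℝ (Set.range fun j : A => M j.1) := by
    rw [hspan]; trivial
  refine ⟨part1, ?_⟩
  set c : ↥A → ℝ := fun k => b.repr (M i) k with hc
  have hrepr : ∑ k : ↥A, c k • M k.1 = M i := by
    conv_rhs => rw [← b.sum_repr (M i)]
    refine Finset.sum_congr rfl fun k _ => ?_
    rw [hbcoe]
  -- there is `j ∈ A \ Atil` with `c j ≠ 0`
  have hexj : ∃ j : ↥A, j.1 ∉ Atil ∧ c j ≠ 0 := by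
    by_contra hcon
    push_neg at hcon
    have hmem : M i ∈ Submodule.span ℝ
        ((fun k : ↥Atil => M k.1) '' {k : ↥Atil | k.1 ∈ A}) := by
      rw [← hrepr]
      refine Submodule.sum_mem _ fun k _ => ?_
      by_cases hk : c k = 0
      · rw [hk, zero_smul]; exact Submodule.zero_mem _
      · have hkt : k.1 ∈ Atil := by
          by_contra hkt
          exact hk (hcon k hkt)
        exact Submodule.smul_mem _ _ (Submodule.subset_span ⟨⟨k.1, hkt⟩, k.2, rfl⟩)
    exact hAtil.notMem_span_image (x := ⟨i, hi⟩) (fun h : i ∈ A => hiA h) hmem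
  obtain ⟨j, hjAt, hcj⟩ := hexj
  have hij : i ≠ j.1 := fun h => hiA (h ▸ j.2)
  refine ⟨j.1, Finset.mem_sdiff.mpr ⟨j.2, hjAt⟩, ?_⟩
  set s : Finset (Fin m) := (insert i A).erase j.1 with hs
  have hcards : Fintype.card ↥s = Module.finrank ℝ (Fin n → ℝ) := by
    rw [Fintype.card_coe, hs, Finset.card_erase_of_mem (Finset.mem_insert_of_mem j.2),
      Finset.card_insert_of_notMem hiA, hcard, Module.finrank_fin_fun]
    simp
  apply linearIndependent_of_top_le_span_of_card_eq_finrank _ hcards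
  -- spanning
  have hMj : M j.1 ∈ Submodule.span ℝ (Set.range fun k : s => M k.1) := by
    have his : i ∈ s := Finset.mem_erase.mpr ⟨hij, Finset.mem_insert_self _ _⟩
    have hsum : c j • M j.1 = M i - ∑ k ∈ Finset.univ.erase j, c k • M k.1 := by
      rw [← hrepr, ← Finset.add_sum_erase _ _ (Finset.mem_univ j)]
      abel
    have h1 : M j.1 = (c j)⁻¹ • (M i - ∑ k ∈ Finset.univ.erase j, c k • M k.1) := by
      rw [← hsum, smul_smul, inv_mul_cancel₀ hcj, one_smul]
    rw [h1]
    refine Submodule.smul_mem _ _ (Submodule.sub_mem _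
      (Submodule.subset_span ⟨⟨i, his⟩, rfl⟩) (Submodule.sum_mem _ fun k hk => ?_))
    have hks : k.1 ∈ s := Finset.mem_erase.mpr
      ⟨fun h => (Finset.mem_erase.mp hk).1 (Subtype.ext h), Finset.mem_insert_of_mem k.2⟩
    exact Submodule.smul_mem _ _ (Submodule.subset_span ⟨⟨k.1, hks⟩, rfl⟩)
  rw [← hspan]
  rw [Submodule.span_le]
  rintro - ⟨a, rfl⟩
  by_cases haj : a.1 = j.1
  · show M a.1 ∈ _
    rw [haj]; exact hMj
  · have has : a.1 ∈ s := Finset.mem_erase.mpr ⟨haj, Finset.mem_insert_of_mem a.2⟩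
    exact Submodule.subset_span ⟨⟨a.1, has⟩, rfl⟩
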